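/- arXiv:1805.09623 — 3 statements merged into one kernel-verified Lean document; each statement's English description precedes it below -/
import Mathlib

section
/- Let G be a finite digraph on n vertices. If G contains no directed cycle, then every set D of vertices with the property that for each vertex r ∉ D there exists v ∈ D with an arc (v,r) such that (D ∪ {r}) \ {v} again has this property (i.e., D is an eternal dominating set) must equal the full vertex set; equivalently, the eternal domination number of an acyclic digraph equals n. -/
/-- A family `F` of guard configurations is "eternally closed": every attack on a vertex
outside a member can be defended by moving one guard along an arc, staying in `F`. -/
def EDSFamily {V : Type*} [DecidableEq V] (D : V → V → Prop) (F : Set (Finset V)) : Prop :=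
  ∀ S ∈ F, ∀ r ∉ S, ∃ v ∈ S, D v r ∧ (insert r S).erase v ∈ F

/-- `S` is an eternal dominating set: it belongs to the greatest eternally closed family. -/
def IsEDS {V : Type*} [DecidableEq V] (D : V → V → Prop) (S : Finset V) : Prop :=
  ∃ F, EDSFamily D F ∧ S ∈ F

/-- The eternal domination number of the digraph `D`. -/
noncomputable def eternalDomNum (V : Type*) [Fintype V] [DecidableEq V]
    (D : V → V → Prop) : ℕ :=
  sInf {k | ∃ S : Finset V, IsEDS D S ∧ S.card = k}

theorem stmt2 {V : Type*} [Fintype V] [DecidableEq V] (D : V → V → Prop)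
    (hac : ∀ v, ¬ Relation.TransGen D v v) :
    (∀ S : Finset V, IsEDS D S → S = Finset.univ) ∧
      eternalDomNum V D = Fintype.card V := by
  have htrans : IsTrans V (Relation.TransGen D) := ⟨fun _ _ _ => Relation.TransGen.trans⟩
  have hirrefl : IsIrrefl V (Relation.TransGen D) := ⟨hac⟩
  have hwf : WellFounded (Relation.TransGen D) :=
    Finite.wellFounded_of_trans_of_irrefl _
  have key : ∀ r : V, ∀ S : Finset V, IsEDS D S → r ∈ S := by
    intro r
    induction r using hwf.induction with
    | _ r ih =>
      intro S hS
      by_contra hr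
      obtain ⟨F, hF, hSF⟩ := hS
      obtain ⟨v, hvS, hvr, hmem⟩ := hF S hSF r hr
      have hv : v ∈ (insert r S).erase v :=
        ih v (Relation.TransGen.single hvr) _ ⟨F, hF, hmem⟩
      exact (Finset.notMem_erase v _) hv
  refine ⟨fun S hS => Finset.eq_univ_iff_forall.mpr fun r => key r S hS, ?_⟩
  have huniv : IsEDS D (Finset.univ : Finset V) :=
    ⟨{Finset.univ}, by
      intro S hS r hr
      rw [Set.mem_singleton_iff] at hS
      subst hS
      exact absurd (Finset.mem_univ r) hr, rfl⟩
  have hmem : Fintype.card V ∈ {k | ∃ S : Finset V, IsEDS D S ∧ S.card = k} :=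
    ⟨Finset.univ, huniv, Finset.card_univ⟩
  apply le_antisymm
  · exact Nat.sInf_le hmem
  · apply le_csInf ⟨_, hmem⟩
    rintro k ⟨S, hS, rfl⟩
    have : S = Finset.univ := Finset.eq_univ_iff_forall.mpr fun r => key r S hS
    simp [this]
end

section
/- Let G₁ be a graph admitting a (k, l₁)-NE coloring and G₂ a graph admitting a (k, l₂)-NE coloring. Then the Cartesian product G₁ □ G₂ admits a (k, l₁ + l₂)-NE coloring. -/
/-- A `(k, l)`-NE coloring of `G`: a proper coloring with `k` colors such that every
vertex has exactly `l` neighbors in each color class other than its own. -/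
def IsNEColoring {V : Type*} (G : SimpleGraph V) (k l : ℕ) (c : V → ZMod k) : Prop :=
  (∀ u v, G.Adj u v → c u ≠ c v) ∧
  ∀ v : V, ∀ i : ZMod k, i ≠ c v → Nat.card {u : V // G.Adj v u ∧ c u = i} = l

theorem stmt10 {V₁ V₂ : Type*} [Fintype V₁] [Fintype V₂]
    (G₁ : SimpleGraph V₁) (G₂ : SimpleGraph V₂) (k l₁ l₂ : ℕ)
    (h₁ : ∃ c₁ : V₁ → ZMod k, IsNEColoring G₁ k l₁ c₁)
    (h₂ : ∃ c₂ : V₂ → ZMod k, IsNEColoring G₂ k l₂ c₂) :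
    ∃ c : V₁ × V₂ → ZMod k, IsNEColoring (G₁.boxProd G₂) k (l₁ + l₂) c := by
  obtain ⟨c₁, hp₁, hc₁⟩ := h₁
  obtain ⟨c₂, hp₂, hc₂⟩ := h₂
  refine ⟨fun p => c₁ p.1 + c₂ p.2, ?_, ?_⟩
  · rintro ⟨u₁, u₂⟩ ⟨w₁, w₂⟩ h
    rw [SimpleGraph.boxProd_adj] at h
    rcases h with ⟨h, rfl⟩ | ⟨h, rfl⟩
    · simpa using hp₁ _ _ h
    · simpa using hp₂ _ _ h
  · rintro ⟨u, v⟩ i hi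
    simp only at hi
    have hi₁ : i - c₂ v ≠ c₁ u := fun h => hi (by rw [← h]; ring)
    have hi₂ : i - c₁ u ≠ c₂ v := fun h => hi (by rw [← h]; ring)
    have key : Nat.card {p : V₁ × V₂ // (G₁.boxProd G₂).Adj (u, v) p ∧ c₁ p.1 + c₂ p.2 = i}
        = Nat.card ({u' : V₁ // G₁.Adj u u' ∧ c₁ u' = i - c₂ v}
          ⊕ {v' : V₂ // G₂.Adj v v' ∧ c₂ v' = i - c₁ u}) := by
      apply Nat.card_congr
      refine Equiv.symm (Equiv.ofBijective (fun s => Sum.elim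
        (fun x => ⟨(x.1, v), by
          rcases x with ⟨u', hadj, hcol⟩
          refine ⟨SimpleGraph.boxProd_adj.2 (Or.inl ⟨hadj, rfl⟩), ?_⟩
          simp only
          rw [hcol]; ring⟩)
        (fun x => ⟨(u, x.1), by
          rcases x with ⟨v', hadj, hcol⟩
          refine ⟨SimpleGraph.boxProd_adj.2 (Or.inr ⟨hadj, rfl⟩), ?_⟩
          simp only
          rw [hcol]; ring⟩) s) ⟨?_, ?_⟩)
      · rintro (⟨u', hu'⟩ | ⟨v', hv'⟩) (⟨u'', hu''⟩ | ⟨v'', hv''⟩) h <;>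
          simp only [Sum.elim_inl, Sum.elim_inr, Subtype.mk.injEq, Prod.mk.injEq] at h
        · simp [h.1]
        · exact absurd (h.1 ▸ hu'.1) (G₁.irrefl)
        · exact absurd (h.2 ▸ hv'.1) (G₂.irrefl)
        · simp [h.2]
      · rintro ⟨⟨w₁, w₂⟩, hadj, hcol⟩
        rw [SimpleGraph.boxProd_adj] at hadj
        simp only at hcol
        rcases hadj with ⟨h, he⟩ | ⟨h, he⟩
        · simp only at h he
          subst he
          exact ⟨Sum.inl ⟨w₁, h, by rw [eq_sub_iff_add_eq]; exact hcol⟩, rfl⟩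
        · simp only at h he
          subst he
          exact ⟨Sum.inr ⟨w₂, h, by rw [eq_sub_iff_add_eq]; rw [← hcol]; ring⟩, rfl⟩
    rw [key, Nat.card_sum, hc₁ u _ hi₁, hc₂ v _ hi₂]
end

section
/- Coloring the vertex (i,j) of the toroidal king's grid C_n ⊠ C_m (with n, m multiples of 5) by the color i + 2j mod 5 yields a (5, 2)-NE coloring. -/
private lemma cast_mem01 {n : ℕ} (hdn : 5 ∣ n) {a : ZMod n} (h : a = 0 ∨ a = 1 ∨ a = -1) :
    ZMod.castHom hdn (ZMod 5) a = 0 ∨ ZMod.castHom hdn (ZMod 5) a = 1 ∨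
      ZMod.castHom hdn (ZMod 5) a = -1 := by
  rcases h with rfl | rfl | rfl <;> simp only [map_zero, map_one, map_neg] <;> tauto

private lemma cast_inj01 {n : ℕ} (hdn : 5 ∣ n) {a t : ZMod n}
    (ha : a = 0 ∨ a = 1 ∨ a = -1) (ht : t = 0 ∨ t = 1 ∨ t = -1)
    (h : ZMod.castHom hdn (ZMod 5) a = ZMod.castHom hdn (ZMod 5) t) : a = t := by
  rcases ha with rfl | rfl | rfl <;> rcases ht with rfl | rfl | rfl <;>
    simp only [map_zero, map_one, map_neg] at h <;>
    first
      | rfl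
      | exact absurd h (by decide)

private lemma neg_mem01 {R : Type*} [Ring R] {a : R} (h : a = 0 ∨ a = 1 ∨ a = -1) :
    -a = 0 ∨ -a = 1 ∨ -a = -1 := by
  rcases h with rfl | rfl | rfl <;> simp

private lemma aux_card {n m : ℕ} (hdn : 5 ∣ n) (hdm : 5 ∣ m)
    (v : ZMod n × ZMod m) (i : ZMod 5) (p q : ZMod n × ZMod m)
    (hp1 : p.1 = 0 ∨ p.1 = 1 ∨ p.1 = -1) (hp2 : p.2 = 0 ∨ p.2 = 1 ∨ p.2 = -1)
    (hq1 : q.1 = 0 ∨ q.1 = 1 ∨ q.1 = -1) (hq2 : q.2 = 0 ∨ q.2 = 1 ∨ q.2 = -1)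
    (hpq : (ZMod.castHom hdn (ZMod 5) p.1, ZMod.castHom hdm (ZMod 5) p.2) ≠
      (ZMod.castHom hdn (ZMod 5) q.1, ZMod.castHom hdm (ZMod 5) q.2))
    (hpc : ZMod.castHom hdn (ZMod 5) p.1 + 2 * ZMod.castHom hdm (ZMod 5) p.2 =
      i - (ZMod.castHom hdn (ZMod 5) v.1 + 2 * ZMod.castHom hdm (ZMod 5) v.2))
    (hqc : ZMod.castHom hdn (ZMod 5) q.1 + 2 * ZMod.castHom hdm (ZMod 5) q.2 =
      i - (ZMod.castHom hdn (ZMod 5) v.1 + 2 * ZMod.castHom hdm (ZMod 5) v.2))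
    (hp0 : ¬(ZMod.castHom hdn (ZMod 5) p.1 = 0 ∧ ZMod.castHom hdm (ZMod 5) p.2 = 0))
    (hq0 : ¬(ZMod.castHom hdn (ZMod 5) q.1 = 0 ∧ ZMod.castHom hdm (ZMod 5) q.2 = 0))
    (huniq : ∀ A B : ZMod 5, (A = 0 ∨ A = 1 ∨ A = -1) → (B = 0 ∨ B = 1 ∨ B = -1) →
      A + 2 * B = i - (ZMod.castHom hdn (ZMod 5) v.1 + 2 * ZMod.castHom hdm (ZMod 5) v.2) →
      (A = ZMod.castHom hdn (ZMod 5) p.1 ∧ B = ZMod.castHom hdm (ZMod 5) p.2) ∨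
      (A = ZMod.castHom hdn (ZMod 5) q.1 ∧ B = ZMod.castHom hdm (ZMod 5) q.2)) :
    Nat.card {u : ZMod n × ZMod m //
      (SimpleGraph.fromRel (fun a b : ZMod n × ZMod m =>
        (b.1 - a.1 = 0 ∨ b.1 - a.1 = 1 ∨ b.1 - a.1 = -1) ∧
        (b.2 - a.2 = 0 ∨ b.2 - a.2 = 1 ∨ b.2 - a.2 = -1))).Adj v u ∧
      ZMod.castHom hdn (ZMod 5) u.1 + 2 * ZMod.castHom hdm (ZMod 5) u.2 = i} = 2 := by
  have hset : {u : ZMod n × ZMod m |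
      (SimpleGraph.fromRel (fun a b : ZMod n × ZMod m =>
        (b.1 - a.1 = 0 ∨ b.1 - a.1 = 1 ∨ b.1 - a.1 = -1) ∧
        (b.2 - a.2 = 0 ∨ b.2 - a.2 = 1 ∨ b.2 - a.2 = -1))).Adj v u ∧
      ZMod.castHom hdn (ZMod 5) u.1 + 2 * ZMod.castHom hdm (ZMod 5) u.2 = i}
      = {v + p, v + q} := by
    ext u
    simp only [Set.mem_setOf_eq, Set.mem_insert_iff, Set.mem_singleton_iff,
      SimpleGraph.fromRel_adj]
    constructor
    · rintro ⟨⟨hne, hrel⟩, hcu⟩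
      have ha : u.1 - v.1 = 0 ∨ u.1 - v.1 = 1 ∨ u.1 - v.1 = -1 := by
        rcases hrel with ⟨h, _⟩ | ⟨h, _⟩
        · exact h
        · have := neg_mem01 h; rwa [neg_sub] at this
      have hb : u.2 - v.2 = 0 ∨ u.2 - v.2 = 1 ∨ u.2 - v.2 = -1 := by
        rcases hrel with ⟨_, h⟩ | ⟨_, h⟩
        · exact h
        · have := neg_mem01 h; rwa [neg_sub] at this
      have hAB : ZMod.castHom hdn (ZMod 5) (u.1 - v.1) +
          2 * ZMod.castHom hdm (ZMod 5) (u.2 - v.2) =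
          i - (ZMod.castHom hdn (ZMod 5) v.1 + 2 * ZMod.castHom hdm (ZMod 5) v.2) := by
        rw [map_sub, map_sub]; linear_combination hcu
      rcases huniq _ _ (cast_mem01 hdn ha) (cast_mem01 hdm hb) hAB with ⟨h1, h2⟩ | ⟨h1, h2⟩
      · left
        have e1 : u.1 - v.1 = p.1 := cast_inj01 hdn ha hp1 h1
        have e2 : u.2 - v.2 = p.2 := cast_inj01 hdm hb hp2 h2
        exact Prod.ext_iff.mpr ⟨by rw [Prod.fst_add]; linear_combination e1,
          by rw [Prod.snd_add]; linear_combination e2⟩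
      · right
        have e1 : u.1 - v.1 = q.1 := cast_inj01 hdn ha hq1 h1
        have e2 : u.2 - v.2 = q.2 := cast_inj01 hdm hb hq2 h2
        exact Prod.ext_iff.mpr ⟨by rw [Prod.fst_add]; linear_combination e1,
          by rw [Prod.snd_add]; linear_combination e2⟩
    · rintro (rfl | rfl)
      · refine ⟨⟨?_, Or.inl ⟨?_, ?_⟩⟩, ?_⟩
        · intro h
          apply hp0
          have h1 : p.1 = 0 := by
            have := congrArg Prod.fst h
            simp only [Prod.fst_add] at this
            linear_combination -this
          have h2 : p.2 = 0 := by
            have := congrArg Prod.snd h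
            simp only [Prod.snd_add] at this
            linear_combination -this
          rw [h1, h2]; simp
        · simpa using hp1
        · simpa using hp2
        · rw [Prod.fst_add, Prod.snd_add, map_add, map_add]
          linear_combination hpc
      · refine ⟨⟨?_, Or.inl ⟨?_, ?_⟩⟩, ?_⟩
        · intro h
          apply hq0
          have h1 : q.1 = 0 := by
            have := congrArg Prod.fst h
            simp only [Prod.fst_add] at this
            linear_combination -this
          have h2 : q.2 = 0 := by
            have := congrArg Prod.snd h
            simp only [Prod.snd_add] at this
            linear_combination -this
          rw [h1, h2]; simp
        · simpa using hq1
        · simpa using hq2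
        · rw [Prod.fst_add, Prod.snd_add, map_add, map_add]
          linear_combination hqc
  have hne2 : v + p ≠ v + q := by
    intro h
    apply hpq
    have h1 : p.1 = q.1 := by
      have := congrArg Prod.fst h
      simp only [Prod.fst_add] at this
      exact add_left_cancel this
    have h2 : p.2 = q.2 := by
      have := congrArg Prod.snd h
      simp only [Prod.snd_add] at this
      exact add_left_cancel this
    rw [h1, h2]
  calc Nat.card {u : ZMod n × ZMod m //
      (SimpleGraph.fromRel (fun a b : ZMod n × ZMod m =>
        (b.1 - a.1 = 0 ∨ b.1 - a.1 = 1 ∨ b.1 - a.1 = -1) ∧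
        (b.2 - a.2 = 0 ∨ b.2 - a.2 = 1 ∨ b.2 - a.2 = -1))).Adj v u ∧
      ZMod.castHom hdn (ZMod 5) u.1 + 2 * ZMod.castHom hdm (ZMod 5) u.2 = i}
      = ({v + p, v + q} : Set (ZMod n × ZMod m)).ncard := by
        rw [← hset]; exact Nat.card_coe_set_eq _
    _ = 2 := Set.ncard_pair hne2

theorem stmt14 (n m : ℕ) (hn : 3 ≤ n) (hm : 3 ≤ m) (hdn : 5 ∣ n) (hdm : 5 ∣ m) :
    IsNEColoring
      (SimpleGraph.fromRel (fun a b : ZMod n × ZMod m =>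
        (b.1 - a.1 = 0 ∨ b.1 - a.1 = 1 ∨ b.1 - a.1 = -1) ∧
        (b.2 - a.2 = 0 ∨ b.2 - a.2 = 1 ∨ b.2 - a.2 = -1)))
      5 2
      (fun p => ZMod.castHom hdn (ZMod 5) p.1 + 2 * ZMod.castHom hdm (ZMod 5) p.2) := by
  constructor
  · intro u w hadj heq
    rw [SimpleGraph.fromRel_adj] at hadj
    obtain ⟨hne, hrel⟩ := hadj
    simp only at heq
    have ha : w.1 - u.1 = 0 ∨ w.1 - u.1 = 1 ∨ w.1 - u.1 = -1 := by
      rcases hrel with ⟨h, _⟩ | ⟨h, _⟩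
      · exact h
      · have := neg_mem01 h; rwa [neg_sub] at this
    have hb : w.2 - u.2 = 0 ∨ w.2 - u.2 = 1 ∨ w.2 - u.2 = -1 := by
      rcases hrel with ⟨_, h⟩ | ⟨_, h⟩
      · exact h
      · have := neg_mem01 h; rwa [neg_sub] at this
    have hAB : ZMod.castHom hdn (ZMod 5) (w.1 - u.1) +
        2 * ZMod.castHom hdm (ZMod 5) (w.2 - u.2) = 0 := by
      rw [map_sub, map_sub]; linear_combination -heq
    have key : ∀ A B : ZMod 5, (A = 0 ∨ A = 1 ∨ A = -1) → (B = 0 ∨ B = 1 ∨ B = -1) →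
        A + 2 * B = 0 → A = 0 ∧ B = 0 := by decide
    obtain ⟨hA0, hB0⟩ := key _ _ (cast_mem01 hdn ha) (cast_mem01 hdm hb) hAB
    have e1 : w.1 - u.1 = (0 : ZMod n) :=
      cast_inj01 hdn ha (Or.inl rfl) (by rw [hA0, map_zero])
    have e2 : w.2 - u.2 = (0 : ZMod m) :=
      cast_inj01 hdm hb (Or.inl rfl) (by rw [hB0, map_zero])
    apply hne
    exact (Prod.ext_iff.mpr ⟨(sub_eq_zero.mp e1).symm, (sub_eq_zero.mp e2).symm⟩)
  · intro v i hi
    simp only at hi ⊢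
    have hδ0 : i - (ZMod.castHom hdn (ZMod 5) v.1 + 2 * ZMod.castHom hdm (ZMod 5) v.2) ≠ 0 :=
      sub_ne_zero.mpr hi
    have h4 : ∀ d : ZMod 5, d ≠ 0 → d = 1 ∨ d = 2 ∨ d = 3 ∨ d = 4 := by decide
    rcases h4 _ hδ0 with hδ | hδ | hδ | hδ
    · exact aux_card hdn hdm v i ((1 : ZMod n), (0 : ZMod m)) ((-1 : ZMod n), (1 : ZMod m))
        (by tauto) (by tauto) (by tauto) (by tauto)
        (by simp only [map_one, map_zero, map_neg]; decide)
        (by simp only [map_one, map_zero, map_neg]; rw [hδ]; decide)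
        (by simp only [map_one, map_zero, map_neg]; rw [hδ]; decide)
        (by simp only [map_one, map_zero, map_neg]; decide)
        (by simp only [map_one, map_zero, map_neg]; decide)
        (by
          intro A B hA hB h
          have h' : A + 2 * B = 1 := by rw [h, hδ]
          simp only [map_one, map_zero, map_neg]
          exact (show ∀ A B : ZMod 5, (A = 0 ∨ A = 1 ∨ A = -1) → (B = 0 ∨ B = 1 ∨ B = -1) →
            A + 2 * B = 1 → (A = 1 ∧ B = 0) ∨ (A = -1 ∧ B = 1) by decide) A B hA hB h')
    · exact aux_card hdn hdm v i ((0 : ZMod n), (1 : ZMod m)) ((-1 : ZMod n), (-1 : ZMod m))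
        (by tauto) (by tauto) (by tauto) (by tauto)
        (by simp only [map_one, map_zero, map_neg]; decide)
        (by simp only [map_one, map_zero, map_neg]; rw [hδ]; decide)
        (by simp only [map_one, map_zero, map_neg]; rw [hδ]; decide)
        (by simp only [map_one, map_zero, map_neg]; decide)
        (by simp only [map_one, map_zero, map_neg]; decide)
        (by
          intro A B hA hB h
          have h' : A + 2 * B = 2 := by rw [h, hδ]
          simp only [map_one, map_zero, map_neg]
          exact (show ∀ A B : ZMod 5, (A = 0 ∨ A = 1 ∨ A = -1) → (B = 0 ∨ B = 1 ∨ B = -1) →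
            A + 2 * B = 2 → (A = 0 ∧ B = 1) ∨ (A = -1 ∧ B = -1) by decide) A B hA hB h')
    · exact aux_card hdn hdm v i ((1 : ZMod n), (1 : ZMod m)) ((0 : ZMod n), (-1 : ZMod m))
        (by tauto) (by tauto) (by tauto) (by tauto)
        (by simp only [map_one, map_zero, map_neg]; decide)
        (by simp only [map_one, map_zero, map_neg]; rw [hδ]; decide)
        (by simp only [map_one, map_zero, map_neg]; rw [hδ]; decide)
        (by simp only [map_one, map_zero, map_neg]; decide)
        (by simp only [map_one, map_zero, map_neg]; decide)
        (by
          intro A B hA hB h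
          have h' : A + 2 * B = 3 := by rw [h, hδ]
          simp only [map_one, map_zero, map_neg]
          exact (show ∀ A B : ZMod 5, (A = 0 ∨ A = 1 ∨ A = -1) → (B = 0 ∨ B = 1 ∨ B = -1) →
            A + 2 * B = 3 → (A = 1 ∧ B = 1) ∨ (A = 0 ∧ B = -1) by decide) A B hA hB h')
    · exact aux_card hdn hdm v i ((1 : ZMod n), (-1 : ZMod m)) ((-1 : ZMod n), (0 : ZMod m))
        (by tauto) (by tauto) (by tauto) (by tauto)
        (by simp only [map_one, map_zero, map_neg]; decide)
        (by simp only [map_one, map_zero, map_neg]; rw [hδ]; decide)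
        (by simp only [map_one, map_zero, map_neg]; rw [hδ]; decide)
        (by simp only [map_one, map_zero, map_neg]; decide)
        (by simp only [map_one, map_zero, map_neg]; decide)
        (by
          intro A B hA hB h
          have h' : A + 2 * B = 4 := by rw [h, hδ]
          simp only [map_one, map_zero, map_neg]
          exact (show ∀ A B : ZMod 5, (A = 0 ∨ A = 1 ∨ A = -1) → (B = 0 ∨ B = 1 ∨ B = -1) →
            A + 2 * B = 4 → (A = 1 ∧ B = -1) ∨ (A = -1 ∧ B = 0) by decide) A B hA hB h')
end
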